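/- There exists a map T from L1(ℝ) (real-valued integrable functions on ℝ with Lebesgue measure) into L2(ℝ × ℝ) (real-valued square-integrable functions on ℝ × ℝ with Lebesgue measure) such that for all f, g ∈ L1(ℝ), ‖T(f) − T(g)‖_{L2}² = ‖f − g‖_{L1}; equivalently, the metric space (L1(ℝ), ‖f − g‖₁^{1/2}) embeds isometrically into a Hilbert space. One such map is T(f)(t,s) = 1 if 0 < s ≤ f(t), T(f)(t,s) = −1 if f(t) < s < 0, and T(f)(t,s) = 0 otherwise. -/

import Mathlib

open MeasureTheory

noncomputable def Hfn (a s : ℝ) : ℝ :=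
  if 0 < s ∧ s ≤ a then 1 else if a < s ∧ s < 0 then -1 else 0

lemma Hfn_zero (s : ℝ) : Hfn 0 s = 0 := by
  simp only [Hfn]
  split_ifs with h1 h2 <;>
    first
    | rfl
    | (exfalso; exact absurd h1.2 (not_le.2 h1.1))
    | (exfalso; exact absurd h2.2 (not_lt.2 h2.1.le))

lemma Hfn_measurable : Measurable (fun p : ℝ × ℝ => Hfn p.1 p.2) := by
  unfold Hfn
  apply Measurable.ite
  · exact (measurableSet_lt measurable_const measurable_snd).inter
      (measurableSet_le measurable_snd measurable_fst)
  · exact measurable_const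
  apply Measurable.ite
  · exact (measurableSet_lt measurable_fst measurable_snd).inter
      (measurableSet_lt measurable_snd measurable_const)
  · exact measurable_const
  · exact measurable_const

lemma slice_pt {a b s : ℝ} (hab : a ≤ b) (hs : s ≠ 0) :
    (Hfn a s - Hfn b s) ^ 2 = (Set.Ioc a b).indicator 1 s := by
  rcases lt_trichotomy s 0 with h | h | h
  · have h0 : ¬ 0 < s := not_lt.2 h.le
    rcases le_or_gt s a with h1 | h1 <;> rcases le_or_gt s b with h2 | h2
    · simp [Hfn, Set.indicator_apply, Set.mem_Ioc, h0, h1.not_gt, h2.not_gt]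
    · exfalso; linarith
    · norm_num [Hfn, Set.indicator_apply, Set.mem_Ioc, h0, h1, h, h2, h2.not_gt]
    · norm_num [Hfn, Set.indicator_apply, Set.mem_Ioc, h0, h1, h2, h, not_le.2 h2]
  · exact absurd h hs
  · have hn : ¬ s < 0 := not_lt.2 h.le
    rcases le_or_gt s a with h1 | h1 <;> rcases le_or_gt s b with h2 | h2
    · simp [Hfn, Set.indicator_apply, Set.mem_Ioc, h, hn, h1, h2, h1.not_gt]
    · exfalso; linarith
    · norm_num [Hfn, Set.indicator_apply, Set.mem_Ioc, h, hn, h1, h2, not_le.2 h1]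
    · norm_num [Hfn, Set.indicator_apply, Set.mem_Ioc, h, hn, not_le.2 h1, not_le.2 h2]

lemma slice_ae (a b : ℝ) :
    (fun s => (Hfn a s - Hfn b s) ^ 2)
      =ᵐ[volume] (Set.Ioc (min a b) (max a b)).indicator 1 := by
  have h0 : ∀ᵐ s : ℝ ∂volume, s ≠ 0 := by
    rw [ae_iff]; simpa using measure_singleton (0 : ℝ)
  filter_upwards [h0] with s hs
  rcases le_total a b with hab | hab
  · rw [min_eq_left hab, max_eq_right hab]; exact slice_pt hab hs
  · rw [min_eq_right hab, max_eq_left hab, show (Hfn a s - Hfn b s) ^ 2 = (Hfn b s - Hfn a s) ^ 2 by ring]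
    exact slice_pt hab hs

lemma slice_integrable (a b : ℝ) :
    Integrable (fun s => (Hfn a s - Hfn b s) ^ 2) volume := by
  refine (Integrable.congr ?_ (slice_ae a b).symm)
  rw [integrable_indicator_iff measurableSet_Ioc]
  exact integrableOn_const measure_Ioc_lt_top.ne (by simp)

lemma slice_integral (a b : ℝ) :
    ∫ s, (Hfn a s - Hfn b s) ^ 2 = |a - b| := by
  rw [integral_congr_ae (slice_ae a b), integral_indicator_one measurableSet_Ioc,
    measureReal_def, Real.volume_Ioc, ENNReal.toReal_ofReal (by simp [min_le_max] : (0:ℝ) ≤ max a b - min a b)]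
  rw [max_sub_min_eq_abs, abs_sub_comm]

lemma prod_meas {f g : ℝ → ℝ} (hfm : Measurable f) (hgm : Measurable g) :
    Measurable (fun p : ℝ × ℝ => (Hfn (f p.1) p.2 - Hfn (g p.1) p.2) ^ 2) := by
  have m1 : Measurable fun p : ℝ × ℝ => Hfn (f p.1) p.2 :=
    Hfn_measurable.comp ((hfm.comp measurable_fst).prodMk measurable_snd)
  have m2 : Measurable fun p : ℝ × ℝ => Hfn (g p.1) p.2 :=
    Hfn_measurable.comp ((hgm.comp measurable_fst).prodMk measurable_snd)
  exact (m1.sub m2).pow_const 2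

lemma norm_int_eq {f g : ℝ → ℝ} (x : ℝ) :
    ∫ y, ‖(Hfn (f x) y - Hfn (g x) y) ^ 2‖ = |f x - g x| := by
  rw [← slice_integral (f x) (g x)]
  refine integral_congr_ae (Filter.Eventually.of_forall fun y => ?_)
  simp only [Real.norm_eq_abs]
  exact abs_of_nonneg (sq_nonneg _)

lemma prod_integrable {f g : ℝ → ℝ} (hfm : Measurable f) (hgm : Measurable g)
    (hfi : Integrable f volume) (hgi : Integrable g volume) :
    Integrable (fun p : ℝ × ℝ => (Hfn (f p.1) p.2 - Hfn (g p.1) p.2) ^ 2)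
      (volume.prod volume) := by
  rw [integrable_prod_iff (prod_meas hfm hgm).aestronglyMeasurable]
  constructor
  · exact Filter.Eventually.of_forall fun x => slice_integrable (f x) (g x)
  · refine (Integrable.congr ((hfi.sub hgi).abs) ?_)
    exact Filter.Eventually.of_forall fun x => (norm_int_eq x).symm

lemma prod_integral {f g : ℝ → ℝ} (hfm : Measurable f) (hgm : Measurable g)
    (hfi : Integrable f volume) (hgi : Integrable g volume) :
    ∫ p : ℝ × ℝ, (Hfn (f p.1) p.2 - Hfn (g p.1) p.2) ^ 2 ∂(volume.prod volume)
      = ∫ x, |f x - g x| := by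
  rw [integral_prod _ (prod_integrable hfm hgm hfi hgi)]
  exact integral_congr_ae (Filter.Eventually.of_forall fun x => slice_integral (f x) (g x))

set_option maxHeartbeats 800000 in
lemma memT (f : Lp ℝ 1 (volume : Measure ℝ)) :
    MemLp (fun p : ℝ × ℝ => Hfn (f p.1) p.2) 2 (volume : Measure (ℝ × ℝ)) := by
  have hm : Measurable ⇑f := (Lp.stronglyMeasurable f).measurable
  have meas : Measurable (fun p : ℝ × ℝ => Hfn (f p.1) p.2) :=
    Hfn_measurable.comp ((hm.comp measurable_fst).prodMk measurable_snd)
  rw [memLp_two_iff_integrable_sq meas.aestronglyMeasurable,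
    show (volume : Measure (ℝ × ℝ)) = (volume : Measure ℝ).prod volume from
      Measure.volume_eq_prod ℝ ℝ]
  have hzero : (fun p : ℝ × ℝ => (Hfn (f p.1) p.2) ^ 2)
      = fun p : ℝ × ℝ => (Hfn (f p.1) p.2 - Hfn ((fun _ => (0:ℝ)) p.1) p.2) ^ 2 := by
    funext p; rw [Hfn_zero]; ring
  rw [hzero]
  have hz : Integrable (fun _ : ℝ => (0:ℝ)) volume := integrable_zero _ _ _
  exact prod_integrable (f := ⇑f) (g := fun _ => (0:ℝ)) hm measurable_const
    (L1.integrable_coeFn f) hz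

/-- Observation 6.2 (Schoenberg): there is a map `T : L₁(ℝ) → L₂(ℝ × ℝ)` with
`‖T f - T g‖₂² = ‖f - g‖₁` for all `f, g`; that is, the metric space
`(L₁(ℝ), ‖f - g‖₁^{1/2})` embeds isometrically into a Hilbert space. -/
theorem L1_snowflake_embeds_in_Hilbert :
    ∃ T : Lp ℝ 1 (volume : Measure ℝ) → Lp ℝ 2 (volume : Measure (ℝ × ℝ)),
      ∀ f g, ‖T f - T g‖ ^ 2 = ‖f - g‖ := by
  refine ⟨fun f => (memT f).toLp _, fun f g => ?_⟩
  set d := (memT f).toLp _ - (memT g).toLp _ with hd_def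
  have hd : ⇑d =ᵐ[volume] fun p : ℝ × ℝ => Hfn (f p.1) p.2 - Hfn (g p.1) p.2 := by
    filter_upwards [Lp.coeFn_sub ((memT f).toLp _) ((memT g).toLp _),
      (memT f).coeFn_toLp, (memT g).coeFn_toLp] with p h1 h2 h3
    rw [hd_def, h1, Pi.sub_apply, h2, h3]
  have h1 : ‖d‖ ^ 2 = ∫ p : ℝ × ℝ, d p * d p := by
    rw [← real_inner_self_eq_norm_sq d, L2.inner_def]
    simp [RCLike.inner_apply, sq]
  have hfm : Measurable ⇑f := (Lp.stronglyMeasurable f).measurable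
  have hgm : Measurable ⇑g := (Lp.stronglyMeasurable g).measurable
  have h2 : ∫ p : ℝ × ℝ, d p * d p
      = ∫ p : ℝ × ℝ, (Hfn (f p.1) p.2 - Hfn (g p.1) p.2) ^ 2 := by
    refine integral_congr_ae (hd.mono fun p hp => ?_)
    dsimp only
    rw [hp]; ring
  have h3 : ∫ p : ℝ × ℝ, (Hfn (f p.1) p.2 - Hfn (g p.1) p.2) ^ 2
      = ∫ x, |f x - g x| := by
    rw [show (volume : Measure (ℝ × ℝ)) = (volume : Measure ℝ).prod volume from
      Measure.volume_eq_prod ℝ ℝ]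
    exact prod_integral hfm hgm (L1.integrable_coeFn f) (L1.integrable_coeFn g)
  have h4 : ‖f - g‖ = ∫ x, |f x - g x| := by
    rw [L1.norm_eq_integral_norm]
    refine integral_congr_ae ((Lp.coeFn_sub f g).mono fun x hx => ?_)
    simp only [hx, Pi.sub_apply, Real.norm_eq_abs]
  rw [h1, h2, h3, h4]
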